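/- If p : (X̃, x̃) → (X, x) is a covering map with X̃ path connected, then the small generated subgroup π₁^sg(X,x) is contained in the image subgroup p_*π₁(X̃, x̃). -/

import Mathlib

open FundamentalGroup

attribute [local instance] Path.Homotopic.setoid

noncomputable section

/-- A loop `β` based at `y` is a *small loop* if it is homotopic (rel endpoints) to a loop
contained in every open neighborhood of `y`. -/
def IsSmallLoop {X : TopCat} {y : X} (β : Path y y) : Prop :=
  ∀ U : Set X, IsOpen U → y ∈ U →
    ∃ β' : Path y y, (∀ t, β' t ∈ U) ∧ Path.Homotopic β β'

/-- The small loop group `π₁ˢ(X, x)`: the set of homotopy classes of small loops at `x`. -/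
def smallLoopSet {X : TopCat} (x : X) : Set (FundamentalGroup X x) :=
  {g | ∃ β : Path x x, IsSmallLoop β ∧ g = fromPath ⟦β⟧}

/-- The SG subgroup `π₁ˢᵍ(X, x)`: generated by conjugates of small loop classes along paths. -/
def sgSubgroup {X : TopCat} (x : X) : Subgroup (FundamentalGroup X x) :=
  Subgroup.closure {g | ∃ (y : X) (α : Path x y) (β : Path y y),
    IsSmallLoop β ∧ g = fromPath ⟦α.trans (β.trans α.symm)⟧}

/-- The quotient topology on the fundamental group, coinduced from the loop space
(with the compact-open topology). -/
def qtop {X : TopCat} (x : X) : TopologicalSpace (FundamentalGroup X x) :=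
  TopologicalSpace.coinduced (fun β : Path x x => fromPath ⟦β⟧) inferInstance

namespace SGProofAux

open unitInterval CategoryTheory

variable {E X : Type*} [TopologicalSpace E] [TopologicalSpace X] {p : E → X}

/-- There is a partial lift of `γ` through `p`, starting at `e₀`, correct up to time `t`. -/
def Lifts (p : E → X) (γ : C(I, X)) (e₀ : E) (t : I) : Prop :=
  ∃ Γ : C(I, E), Γ 0 = e₀ ∧ ∀ s, s ≤ t → p (Γ s) = γ s

theorem lifts_step {z : X} (T : Bundle.Trivialization (p ⁻¹' {z}) p) (γ : C(I, X)) (e₀ : E)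
    {t t' : I} (htt' : t ≤ t') (ht : Lifts p γ e₀ t)
    (hU : ∀ s : I, t ≤ s → s ≤ t' → γ s ∈ T.baseSet) : Lifts p γ e₀ t' := by
  obtain ⟨Γ, h0, hΓ⟩ := ht
  set e := Γ t with he
  have hpt : p e = γ t := hΓ t le_rfl
  have he_src : e ∈ T.source := T.mem_source.2 (by rw [hpt]; exact hU t le_rfl htt')
  have hclamp : ∀ s : I, t ≤ max t (min s t') ∧ max t (min s t') ≤ t' :=
    fun s => ⟨le_max_left _ _, max_le htt' (min_le_right _ _)⟩
  have hmemU : ∀ s : I, γ (max t (min s t')) ∈ T.baseSet :=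
    fun s => hU _ (hclamp s).1 (hclamp s).2
  set g : I → E := fun s => T.toPartialHomeomorph.symm (γ (max t (min s t')), (T e).2) with hgdef
  have hg : Continuous g := by
    apply T.toPartialHomeomorph.continuousOn_symm.comp_continuous
    · exact (γ.continuous.comp (continuous_const.max (continuous_id.min continuous_const))).prodMk
        continuous_const
    · intro s
      exact T.mem_target.2 (hmemU s)
  have hgt : g t = e := by
    have h1 : max t (min t t') = t := by simp [min_eq_left htt']
    have h2 : (γ t, (T e).2) = T e := by
      refine Prod.ext ?_ rfl
      rw [T.coe_fst he_src, hpt]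
    rw [hgdef]
    simp only [h1, h2]
    exact T.toPartialHomeomorph.left_inv he_src
  have hpg : ∀ s : I, t ≤ s → s ≤ t' → p (g s) = γ s := by
    intro s hts hst'
    have h1 : max t (min s t') = s := by rw [min_eq_left hst', max_eq_right hts]
    rw [hgdef]
    simp only [h1]
    exact T.proj_symm_apply (T.mem_target.2 (by rw [← h1] at hts hst' ⊢; exact hmemU s))
  refine ⟨⟨fun s => if s ≤ t then Γ s else g s, ?_⟩, ?_, ?_⟩
  · exact Continuous.if_le Γ.continuous hg continuous_id continuous_const
      (fun s hs => by rw [hs, hgt])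
  · simpa using h0
  · intro s hs
    by_cases h : s ≤ t
    · simpa [h] using hΓ s h
    · have hts : t ≤ s := le_of_not_ge h
      simpa [h] using hpg s hts hs

theorem exists_path_lift (hp : IsCoveringMap p) (γ : C(I, X)) (e₀ : E) (h0 : p e₀ = γ 0) :
    ∃ Γ : C(I, E), Γ 0 = e₀ ∧ ∀ s, p (Γ s) = γ s := by
  set S : Set ℝ := {r : ℝ | ∃ t : I, Lifts p γ e₀ t ∧ (t : ℝ) = r} with hS
  have h0S : (0 : ℝ) ∈ S := by
    refine ⟨0, ⟨⟨fun _ => e₀, continuous_const⟩, rfl, ?_⟩, rfl⟩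
    intro s hs
    have : s = 0 := le_antisymm hs s.2.1
    rw [this]; exact h0
  have hbdd : BddAbove S := ⟨1, by rintro r ⟨t, _, rfl⟩; exact t.2.2⟩
  have hne : S.Nonempty := ⟨0, h0S⟩
  set c : ℝ := sSup S with hc
  have hc0 : 0 ≤ c := le_csSup hbdd h0S
  have hc1 : c ≤ 1 := csSup_le hne (by rintro r ⟨t, _, rfl⟩; exact t.2.2)
  set cI : I := ⟨c, hc0, hc1⟩ with hcI
  haveI : Nonempty (p ⁻¹' {γ cI}) := by
    obtain ⟨_, U, hxU, hU, _, H, hH⟩ := hp (γ cI)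
    have : γ ⁻¹' U ∈ nhds cI := (γ.continuous.continuousAt).preimage_mem_nhds (hU.mem_nhds hxU)
    obtain ⟨δ, hδ, h⟩ := Metric.mem_nhds_iff.1 this
    obtain ⟨r, ⟨t, ⟨Γ, _, hΓ⟩, rfl⟩, htr⟩ :=
      exists_lt_of_lt_csSup hne (show c - δ < c by linarith)
    have htc : (t : ℝ) ≤ c := le_csSup hbdd ⟨t, ⟨Γ, ‹_›, hΓ⟩, rfl⟩
    have hγt : γ t ∈ U := h (by
      rw [Metric.mem_ball, Subtype.dist_eq, Real.dist_eq, abs_sub_lt_iff]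
      constructor <;> simp only [hcI] <;> linarith)
    have hmem : Γ t ∈ p ⁻¹' U := by
      show p (Γ t) ∈ U
      rw [hΓ t le_rfl]; exact hγt
    exact ⟨(H ⟨Γ t, hmem⟩).2⟩
  obtain ⟨δ, hδ, hball⟩ : ∃ δ > 0, ∀ s : I, |(s : ℝ) - c| < δ →
      γ s ∈ (hp (γ cI)).toTrivialization.baseSet := by
    have : γ ⁻¹' (hp (γ cI)).toTrivialization.baseSet ∈ nhds cI := by
      refine (γ.continuous.continuousAt).preimage_mem_nhds ?_
      exact (hp (γ cI)).toTrivialization.open_baseSet.mem_nhds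
        ((hp (γ cI)).mem_toTrivialization_baseSet)
    obtain ⟨δ, hδ, h⟩ := Metric.mem_nhds_iff.1 this
    exact ⟨δ, hδ, fun s hs =>
      h (by simpa [Metric.mem_ball, Real.dist_eq, Subtype.dist_eq] using hs)⟩
  have hcS : Lifts p γ e₀ cI := by
    obtain ⟨r, ⟨t, htS, rfl⟩, htr⟩ := exists_lt_of_lt_csSup hne (show c - δ < c by linarith)
    have htc : (t : ℝ) ≤ c := le_csSup hbdd ⟨t, htS, rfl⟩
    refine lifts_step (hp (γ cI)).toTrivialization γ e₀ (show t ≤ cI from htc) htS ?_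
    intro s hts hsc
    apply hball
    rw [abs_sub_lt_iff]
    constructor
    · have : (s : ℝ) ≤ c := hsc
      linarith
    · have : (t : ℝ) ≤ s := hts
      linarith
  have hc1' : c = 1 := by
    by_contra hne1
    have hclt : c < 1 := lt_of_le_of_ne hc1 hne1
    set t' : ℝ := min (c + δ / 2) 1 with ht'
    have ht'0 : 0 ≤ t' := le_min (by linarith) zero_le_one
    have ht'1 : t' ≤ 1 := min_le_right _ _
    set tI' : I := ⟨t', ht'0, ht'1⟩ with htI'
    have hct' : c ≤ t' := le_min (by linarith) hc1
    have hlift' : Lifts p γ e₀ tI' := by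
      refine lifts_step (hp (γ cI)).toTrivialization γ e₀ (show cI ≤ tI' from hct') hcS ?_
      intro s hcs hst'
      apply hball
      rw [abs_sub_lt_iff]
      have h1 : (s : ℝ) ≤ t' := hst'
      have h2 : c ≤ (s : ℝ) := hcs
      have h3 : t' ≤ c + δ / 2 := min_le_left _ _
      constructor <;> linarith
    have : t' ≤ c := le_csSup hbdd ⟨tI', hlift', rfl⟩
    have : c < t' := lt_min (by linarith) hclt
    linarith
  obtain ⟨Γ, hΓ0, hΓ⟩ := hcS
  refine ⟨Γ, hΓ0, fun s => hΓ s ?_⟩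
  have hsc : (s : ℝ) ≤ c := by rw [hc1']; exact s.2.2
  exact Subtype.coe_le_coe.1 hsc

theorem fromPath_trans {Y : TopCat} {x : Y} (a b : Path x x) :
    fromPath (X := Y) ⟦a.trans b⟧ = fromPath ⟦b⟧ * fromPath ⟦a⟧ := by
  rfl

theorem fromPath_refl {Y : TopCat} {x : Y} : fromPath (X := Y) ⟦Path.refl x⟧ = 1 := by
  rfl

theorem fromPath_symm {Y : TopCat} {x : Y} (a : Path x x) :
    (fromPath (X := Y) ⟦a⟧)⁻¹ = fromPath ⟦a.symm⟧ := by
  rfl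

theorem trans_trans_symm_congr {Y : Type*} [TopologicalSpace Y] {x y y' : Y}
    (a : Path x y) (a' : Path x y') (b : Path y y) (b' : Path y' y')
    (ha : ∀ t, a t = a' t) (hb : ∀ t, b t = b' t) :
    a.trans (b.trans a.symm) = a'.trans (b'.trans a'.symm) := by
  have hy : y = y' := by rw [← a.target, ← a'.target]; exact ha 1
  subst hy
  have h1 : a = a' := by ext t; exact ha t
  have h2 : b = b' := by ext t; exact hb t
  rw [h1, h2]

end SGProofAux

open SGProofAux in
/-- If `p : (X̃, x₀) → (X, x)` is a covering map with `X̃` path connected, then the SG subgroup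
`π₁ˢᵍ(X, x)` is contained in the image subgroup `p₊π₁(X̃, x₀)`. -/
theorem sgSubgroup_le_image_of_covering {E X : TopCat} (p : E → X) (hp : IsCoveringMap p)
    (hpc : PathConnectedSpace E) (x₀ : E) :
    ∀ g ∈ sgSubgroup (p x₀), ∃ γ : Path x₀ x₀, g = fromPath ⟦γ.map hp.continuous⟧ := by
  intro g hg
  let H : Subgroup (FundamentalGroup X (p x₀)) :=
    { carrier := {g | ∃ γ : Path x₀ x₀, g = fromPath ⟦γ.map hp.continuous⟧}
      one_mem' := ⟨Path.refl x₀, by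
        have : (Path.refl x₀).map hp.continuous = Path.refl (p x₀) := by
          ext t; rfl
        rw [this, fromPath_refl]⟩
      mul_mem' := by
        rintro a b ⟨γ₁, rfl⟩ ⟨γ₂, rfl⟩
        refine ⟨γ₂.trans γ₁, ?_⟩
        rw [Path.map_trans, fromPath_trans]
      inv_mem' := by
        rintro a ⟨γ, rfl⟩
        refine ⟨γ.symm, ?_⟩
        rw [← Path.map_symm, ← fromPath_symm] }
  suffices hle : sgSubgroup (p x₀) ≤ H from hle hg
  refine Subgroup.closure_le H |>.2 ?_
  rintro g ⟨y, α, β, hβ, rfl⟩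
  -- lift α to a path in E starting at x₀
  obtain ⟨Γ, hΓ0, hΓ⟩ := exists_path_lift hp α.toContinuousMap x₀
    (by rw [show α.toContinuousMap 0 = α 0 from rfl, α.source])
  let A : Path x₀ (Γ 1) := { toContinuousMap := Γ, source' := hΓ0, target' := rfl }
  have hA : ∀ t, (A.map hp.continuous) t = α t := fun t => hΓ t
  have hpe : p (Γ 1) = y := by rw [hΓ 1, show α.toContinuousMap 1 = α 1 from rfl, α.target]
  -- the trivialization at y and a small representative of β inside its base set
  haveI : Nonempty (p ⁻¹' {y}) := ⟨⟨Γ 1, hpe⟩⟩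
  set T := (hp y).toTrivialization with hT
  obtain ⟨β', hβ'U, hββ'⟩ := hβ T.baseSet T.open_baseSet ((hp y).mem_toTrivialization_baseSet)
  have he_src : Γ 1 ∈ T.source := by
    rw [T.mem_source, hpe]; exact (hp y).mem_toTrivialization_baseSet
  -- lift β' using the local section through Γ 1
  let B : Path (Γ 1) (Γ 1) :=
    { toFun := fun t => T.toPartialHomeomorph.symm (β' t, (T (Γ 1)).2)
      continuous_toFun := T.toPartialHomeomorph.continuousOn_symm.comp_continuous
        (β'.continuous.prodMk continuous_const) (fun t => T.mem_target.2 (hβ'U t))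
      source' := by
        show T.toPartialHomeomorph.symm (β' 0, (T (Γ 1)).2) = Γ 1
        have h2 : (β' 0, (T (Γ 1)).2) = T (Γ 1) := by
          refine Prod.ext ?_ rfl
          rw [T.coe_fst he_src, hpe, β'.source]
        rw [h2]
        exact T.toPartialHomeomorph.left_inv he_src
      target' := by
        show T.toPartialHomeomorph.symm (β' 1, (T (Γ 1)).2) = Γ 1
        have h2 : (β' 1, (T (Γ 1)).2) = T (Γ 1) := by
          refine Prod.ext ?_ rfl
          rw [T.coe_fst he_src, hpe, β'.target]
        rw [h2]
        exact T.toPartialHomeomorph.left_inv he_src }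
  have hB : ∀ t, (B.map hp.continuous) t = β' t := fun t =>
    T.proj_symm_apply (T.mem_target.2 (hβ'U t))
  refine ⟨A.trans (B.trans A.symm), ?_⟩
  have hmap : (A.trans (B.trans A.symm)).map hp.continuous
      = (A.map hp.continuous).trans ((B.map hp.continuous).trans (A.map hp.continuous).symm) := by
    rw [Path.map_trans, Path.map_trans, Path.map_symm]
  have hcongr : (A.map hp.continuous).trans ((B.map hp.continuous).trans
      (A.map hp.continuous).symm) = α.trans (β'.trans α.symm) :=
    trans_trans_symm_congr _ _ _ _ hA hB
  rw [hmap, hcongr]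
  congr 1
  exact Quotient.sound (Path.Homotopic.hcomp (Path.Homotopic.refl α)
    (Path.Homotopic.hcomp hββ' (Path.Homotopic.refl α.symm)))
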